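/- Every polynomial in the intersection J_{C3} ∩ J_{K13} that is homogeneous of total degree 3 and involves only the variables x1, y1, x2, y2, x3, y3 (i.e., has degree 0 in x4 and y4) is zero. -/

import Mathlib

/- Variables: the polynomial ring K[x1,x2,x3,x4,y1,y2,y3,y4] is modelled as
`MvPolynomial (Fin 4 ⊕ Fin 4) K`, where `x (k-1) = X (Sum.inl (k-1))` stands for x_k and
`y (k-1) = X (Sum.inr (k-1))` stands for y_k. -/

open MvPolynomial

section Aux

variable {K : Type*} [Field K]

lemma aeval_fix {σ : Type*} [DecidableEq σ] (p : MvPolynomial σ K)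
    (s : σ → MvPolynomial σ K) (h : ∀ i ∈ p.vars, s i = X i) :
    aeval s p = p := by
  have : (aeval s : MvPolynomial σ K →ₐ[K] MvPolynomial σ K).toRingHom p
      = (RingHom.id (MvPolynomial σ K)) p := by
    apply MvPolynomial.hom_congr_vars
    · ext a
      simp [algebraMap_eq]
    · intro i hi _
      simpa using h i hi
    · rfl
  simpa using this

lemma hc_mul (p g : MvPolynomial (Fin 4 ⊕ Fin 4) K) (hg : g.IsHomogeneous 2) :
    homogeneousComponent 3 (p * g) = homogeneousComponent 1 p * g := by
  have hsum : ∑ i ∈ Finset.range (p.totalDegree + 2), homogeneousComponent i p = p := by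
    conv_rhs => rw [← sum_homogeneousComponent p]
    refine (Finset.sum_subset (fun i hi => ?_) (fun i _ hi => ?_)).symm
    · simp only [Finset.mem_range] at hi ⊢; omega
    · simp only [Finset.mem_range, not_lt] at hi
      exact homogeneousComponent_eq_zero _ p (by omega)
  conv_lhs => rw [← hsum]
  rw [Finset.sum_mul, map_sum]
  have hterm : ∀ i, homogeneousComponent 3 (homogeneousComponent i p * g)
      = if i = 1 then homogeneousComponent 1 p * g else 0 := by
    intro i
    have hm : homogeneousComponent i p * g ∈ homogeneousSubmodule (Fin 4 ⊕ Fin 4) K (i + 2) :=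
      (mem_homogeneousSubmodule _ _).2
        ((homogeneousComponent_isHomogeneous i p).mul hg)
    rw [homogeneousComponent_of_mem hm]
    by_cases h : i = 1
    · subst h; norm_num
    · have h2 : ¬(3 = i + 2) := by omega
      simp [h, h2]
  simp_rw [hterm]
  rw [Finset.sum_ite_eq' (Finset.range (p.totalDegree + 2)) 1]
  rw [if_pos (by simp)]

lemma lin_expand (q : MvPolynomial (Fin 4 ⊕ Fin 4) K) (h : q.IsHomogeneous 1) :
    q = ∑ i : Fin 4 ⊕ Fin 4, C (coeff (Finsupp.single i 1) q) * X i := by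
  ext d
  rw [coeff_sum]
  by_cases hd : Finsupp.degree d = 1
  · obtain ⟨i, hi⟩ : ∃ i, d = Finsupp.single i 1 := by
      have hne : d.support.Nonempty := by
        rcases Finset.eq_empty_or_nonempty d.support with he | hne
        · exfalso
          have : d = 0 := by
            ext j; by_contra hj
            exact (Finset.notMem_empty j) (he ▸ Finsupp.mem_support_iff.2 hj)
          rw [this] at hd; simp [Finsupp.degree] at hd
        · exact hne
      obtain ⟨i, hi⟩ := hne
      refine ⟨i, ?_⟩
      have hsum : d i + ∑ j ∈ d.support.erase i, d j = 1 := by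
        rw [Finset.add_sum_erase _ _ hi]
        exact hd
      have hdi : d i ≠ 0 := Finsupp.mem_support_iff.1 hi
      have h1 : d i = 1 := by omega
      have h2 : ∑ j ∈ d.support.erase i, d j = 0 := by omega
      have hsupp : d.support = {i} := by
        apply Finset.eq_singleton_iff_unique_mem.2
        refine ⟨hi, fun j hj => ?_⟩
        by_contra hji
        have : d j = 0 := (Finset.sum_eq_zero_iff).1 h2 j (Finset.mem_erase.2 ⟨hji, hj⟩)
        exact Finsupp.mem_support_iff.1 hj this
      have := Finsupp.support_eq_singleton.1 hsupp
      rw [this.2, h1]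
    subst hi
    rw [Finset.sum_eq_single i]
    · simp [coeff_C_mul, coeff_X']
    · intro j _ hji
      rw [coeff_C_mul, coeff_X', if_neg, mul_zero]
      intro hc
      exact hji ((Finsupp.single_left_inj one_ne_zero).1 hc)
    · intro hni; exact absurd (Finset.mem_univ i) hni
  · rw [h.coeff_eq_zero hd]
    apply (Finset.sum_eq_zero _).symm
    intro j _
    rw [coeff_C_mul, coeff_X', if_neg, mul_zero]
    intro hc
    rw [← hc] at hd
    exact hd (by simp [Finsupp.degree_single])


end Aux


noncomputable section

variable (K : Type*) [Field K]

/-- x_(i+1) -/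
noncomputable def x (i : Fin 4) : MvPolynomial (Fin 4 ⊕ Fin 4) K := X (Sum.inl i)

/-- y_(i+1) -/
noncomputable def y (i : Fin 4) : MvPolynomial (Fin 4 ⊕ Fin 4) K := X (Sum.inr i)

/-- The parity binomial edge ideal of the triangle on vertices {1,3,4}. -/
noncomputable def JC3 : Ideal (MvPolynomial (Fin 4 ⊕ Fin 4) K) :=
  Ideal.span {x K 0 * x K 2 - y K 0 * y K 2,
              x K 0 * x K 3 - y K 0 * y K 3,
              x K 2 * x K 3 - y K 2 * y K 3}

/-- The parity binomial edge ideal of the star with center 2 and leaves 1,3,4. -/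
noncomputable def JK13 : Ideal (MvPolynomial (Fin 4 ⊕ Fin 4) K) :=
  Ideal.span {x K 0 * x K 1 - y K 0 * y K 1,
              x K 1 * x K 2 - y K 1 * y K 2,
              x K 1 * x K 3 - y K 1 * y K 3}

/-- Every polynomial in J_{C3} ∩ J_{K13} that is homogeneous of total degree 3 and
involves only the variables x1, y1, x2, y2, x3, y3 (i.e. neither x4 nor y4 occurs in it)
is zero. -/
theorem JC3_inter_JK13_no_degree_three_element
    (f : MvPolynomial (Fin 4 ⊕ Fin 4) K)
    (hf : f ∈ JC3 K ⊓ JK13 K) (hhom : f.IsHomogeneous 3)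
    (hx4 : Sum.inl (3 : Fin 4) ∉ f.vars) (hy4 : Sum.inr (3 : Fin 4) ∉ f.vars) :
    f = 0 := by
  classical
  obtain ⟨hf1, hf2⟩ := Submodule.mem_inf.mp hf
  simp only [JC3, x, y] at hf1
  simp only [JK13, x, y] at hf2
  rw [Ideal.mem_span_insert] at hf1
  obtain ⟨p1, z1, hz1, hf1'⟩ := hf1
  rw [Ideal.mem_span_pair] at hz1
  obtain ⟨p2, p3, hz1'⟩ := hz1
  rw [Ideal.mem_span_insert] at hf2
  obtain ⟨m1, z2, hz2, hf2'⟩ := hf2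
  rw [Ideal.mem_span_pair] at hz2
  obtain ⟨m2, m3, hz2'⟩ := hz2
  have hrep1 : f = p1 * (X (Sum.inl 0) * X (Sum.inl 2) - X (Sum.inr 0) * X (Sum.inr 2))
      + p2 * (X (Sum.inl 0) * X (Sum.inl 3) - X (Sum.inr 0) * X (Sum.inr 3))
      + p3 * (X (Sum.inl 2) * X (Sum.inl 3) - X (Sum.inr 2) * X (Sum.inr 3)) := by
    rw [hf1', ← hz1']; ring
  have hrep2 : f = m1 * (X (Sum.inl 0) * X (Sum.inl 1) - X (Sum.inr 0) * X (Sum.inr 1))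
      + m2 * (X (Sum.inl 1) * X (Sum.inl 2) - X (Sum.inr 1) * X (Sum.inr 2))
      + m3 * (X (Sum.inl 1) * X (Sum.inl 3) - X (Sum.inr 1) * X (Sum.inr 3)) := by
    rw [hf2', ← hz2']; ring
  -- the substitution killing x4, y4
  set s0 : Fin 4 ⊕ Fin 4 → MvPolynomial (Fin 4 ⊕ Fin 4) K :=
    Sum.elim ![X (Sum.inl 0), X (Sum.inl 1), X (Sum.inl 2), 0]
             ![X (Sum.inr 0), X (Sum.inr 1), X (Sum.inr 2), 0] with hs0
  have hpsif : aeval s0 f = f := by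
    apply aeval_fix
    rintro (i | i) hi <;> fin_cases i
    · simp [hs0]
    · simp [hs0]
    · simp [hs0]
    · exact absurd hi hx4
    · simp [hs0]
    · simp [hs0]
    · simp [hs0]
    · exact absurd hi hy4
  set G : MvPolynomial (Fin 4 ⊕ Fin 4) K :=
    X (Sum.inl 0) * X (Sum.inl 2) - X (Sum.inr 0) * X (Sum.inr 2) with hGdef
  have hGhom : G.IsHomogeneous 2 := by
    apply MvPolynomial.IsHomogeneous.sub <;>
      exact (isHomogeneous_X _ _).mul (isHomogeneous_X _ _)
  -- f = q0 * G
  set q0 : MvPolynomial (Fin 4 ⊕ Fin 4) K := aeval s0 p1 with hq0def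
  have e01 : aeval s0 (X (Sum.inl 0) * X (Sum.inl 2) - X (Sum.inr 0) * X (Sum.inr 2)
      : MvPolynomial (Fin 4 ⊕ Fin 4) K) = G := by
    rw [hGdef]; simp [hs0]
  have e02 : aeval s0 (X (Sum.inl 0) * X (Sum.inl 3) - X (Sum.inr 0) * X (Sum.inr 3)
      : MvPolynomial (Fin 4 ⊕ Fin 4) K) = 0 := by
    simp [hs0]
  have e03 : aeval s0 (X (Sum.inl 2) * X (Sum.inl 3) - X (Sum.inr 2) * X (Sum.inr 3)
      : MvPolynomial (Fin 4 ⊕ Fin 4) K) = 0 := by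
    simp [hs0]
  have hq0 : f = q0 * G := by
    conv_lhs => rw [← hpsif, hrep1]
    rw [map_add, map_add, map_mul, map_mul, map_mul, e01, e02, e03, mul_zero, mul_zero,
      add_zero, add_zero]
  -- f = q * G with q homogeneous of degree 1
  set q : MvPolynomial (Fin 4 ⊕ Fin 4) K := homogeneousComponent 1 q0 with hqdef
  have hfq : f = q * G := by
    have h3 : homogeneousComponent 3 f = f := by
      rw [homogeneousComponent_of_mem ((mem_homogeneousSubmodule _ _).2 hhom), if_pos rfl]
    calc f = homogeneousComponent 3 f := h3.symm
      _ = homogeneousComponent 3 (q0 * G) := by rw [← hq0]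
      _ = q * G := hc_mul q0 G hGhom
  -- G ≠ 0
  have hGmon : (X (Sum.inl 0) * X (Sum.inl 2) : MvPolynomial (Fin 4 ⊕ Fin 4) K)
      = monomial (Finsupp.single (Sum.inl 0) 1 + Finsupp.single (Sum.inl 2) 1) 1 := by
    rw [X, X, monomial_mul, one_mul]
  have hGmon' : (X (Sum.inr 0) * X (Sum.inr 2) : MvPolynomial (Fin 4 ⊕ Fin 4) K)
      = monomial (Finsupp.single (Sum.inr 0) 1 + Finsupp.single (Sum.inr 2) 1) 1 := by
    rw [X, X, monomial_mul, one_mul]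
  have hGne : G ≠ 0 := by
    intro h
    have hco := congrArg (coeff (Finsupp.single (Sum.inl (0 : Fin 4)) 1
      + Finsupp.single (Sum.inl (2 : Fin 4)) 1)) h
    have hne : (Finsupp.single (Sum.inr (0 : Fin 4)) 1 + Finsupp.single (Sum.inr (2 : Fin 4)) 1 :
        (Fin 4 ⊕ Fin 4) →₀ ℕ) ≠ Finsupp.single (Sum.inl 0) 1 + Finsupp.single (Sum.inl 2) 1 := by
      intro hc
      have := DFunLike.congr_fun hc (Sum.inl (0 : Fin 4))
      simp [Finsupp.single_apply] at this
    rw [hGdef] at hco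
    rw [coeff_sub, hGmon, hGmon', coeff_monomial, coeff_monomial, if_pos rfl, if_neg hne] at hco
    simp at hco
  -- first substitution: kill x2, y2 (indices inl 1, inr 1)
  set s1 : Fin 4 ⊕ Fin 4 → MvPolynomial (Fin 4 ⊕ Fin 4) K :=
    Sum.elim ![X (Sum.inl 0), 0, X (Sum.inl 2), X (Sum.inl 3)]
             ![X (Sum.inr 0), 0, X (Sum.inr 2), X (Sum.inr 3)] with hs1
  have e11 : aeval s1 (X (Sum.inl 0) * X (Sum.inl 1) - X (Sum.inr 0) * X (Sum.inr 1)
      : MvPolynomial (Fin 4 ⊕ Fin 4) K) = 0 := by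
    simp [hs1]
  have e12 : aeval s1 (X (Sum.inl 1) * X (Sum.inl 2) - X (Sum.inr 1) * X (Sum.inr 2)
      : MvPolynomial (Fin 4 ⊕ Fin 4) K) = 0 := by
    simp [hs1]
  have e13 : aeval s1 (X (Sum.inl 1) * X (Sum.inl 3) - X (Sum.inr 1) * X (Sum.inr 3)
      : MvPolynomial (Fin 4 ⊕ Fin 4) K) = 0 := by
    simp [hs1]
  have hs1f : aeval s1 f = 0 := by
    conv_lhs => rw [hrep2]
    rw [map_add, map_add, map_mul, map_mul, map_mul, e11, e12, e13, mul_zero, mul_zero,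
      mul_zero, add_zero, add_zero]
  have hs1q : aeval s1 q = 0 := by
    rw [hfq, map_mul] at hs1f
    have hG1 : aeval s1 G = G := by rw [hGdef]; simp [hs1]
    rw [hG1] at hs1f
    exact (mul_eq_zero.mp hs1f).resolve_right hGne
  -- second substitution
  set s2 : Fin 4 ⊕ Fin 4 → MvPolynomial (Fin 4 ⊕ Fin 4) K :=
    Sum.elim ![X (Sum.inr 1), X (Sum.inl 1), X (Sum.inr 1), 0]
             ![X (Sum.inl 1), X (Sum.inr 1), X (Sum.inl 1), 0] with hs2
  have e21 : aeval s2 (X (Sum.inl 0) * X (Sum.inl 1) - X (Sum.inr 0) * X (Sum.inr 1)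
      : MvPolynomial (Fin 4 ⊕ Fin 4) K) = 0 := by
    simp [hs2, mul_comm]
  have e22 : aeval s2 (X (Sum.inl 1) * X (Sum.inl 2) - X (Sum.inr 1) * X (Sum.inr 2)
      : MvPolynomial (Fin 4 ⊕ Fin 4) K) = 0 := by
    simp [hs2, mul_comm]
  have e23 : aeval s2 (X (Sum.inl 1) * X (Sum.inl 3) - X (Sum.inr 1) * X (Sum.inr 3)
      : MvPolynomial (Fin 4 ⊕ Fin 4) K) = 0 := by
    simp [hs2]
  have hs2f : aeval s2 f = 0 := by
    conv_lhs => rw [hrep2]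
    rw [map_add, map_add, map_mul, map_mul, map_mul, e21, e22, e23, mul_zero, mul_zero,
      mul_zero, add_zero, add_zero]
  have hG2ne : (X (Sum.inr 1) * X (Sum.inr 1) - X (Sum.inl 1) * X (Sum.inl 1) :
      MvPolynomial (Fin 4 ⊕ Fin 4) K) ≠ 0 := by
    intro h
    have hco := congrArg (coeff (Finsupp.single (Sum.inr (1 : Fin 4)) 1
      + Finsupp.single (Sum.inr (1 : Fin 4)) 1)) h
    have hm1 : (X (Sum.inr 1) * X (Sum.inr 1) : MvPolynomial (Fin 4 ⊕ Fin 4) K)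
        = monomial (Finsupp.single (Sum.inr 1) 1 + Finsupp.single (Sum.inr 1) 1) 1 := by
      rw [X, monomial_mul, one_mul]
    have hm2 : (X (Sum.inl 1) * X (Sum.inl 1) : MvPolynomial (Fin 4 ⊕ Fin 4) K)
        = monomial (Finsupp.single (Sum.inl 1) 1 + Finsupp.single (Sum.inl 1) 1) 1 := by
      rw [X, monomial_mul, one_mul]
    have hne : (Finsupp.single (Sum.inl (1 : Fin 4)) 1 + Finsupp.single (Sum.inl (1 : Fin 4)) 1 :
        (Fin 4 ⊕ Fin 4) →₀ ℕ) ≠ Finsupp.single (Sum.inr 1) 1 + Finsupp.single (Sum.inr 1) 1 := by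
      intro hc
      have := DFunLike.congr_fun hc (Sum.inl (1 : Fin 4))
      simp [Finsupp.single_apply] at this
    rw [coeff_sub, hm1, hm2, coeff_monomial, coeff_monomial, if_pos rfl, if_neg hne] at hco
    simp at hco
  have hs2q : aeval s2 q = 0 := by
    rw [hfq, map_mul] at hs2f
    have hG2 : aeval s2 G = X (Sum.inr 1) * X (Sum.inr 1) - X (Sum.inl 1) * X (Sum.inl 1) := by
      rw [hGdef]; simp [hs2]
    rw [hG2] at hs2f
    exact (mul_eq_zero.mp hs2f).resolve_right hG2ne
  -- expand q as a linear combination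
  have hqhom : q.IsHomogeneous 1 := homogeneousComponent_isHomogeneous 1 q0
  have hqlin : q = C (coeff (Finsupp.single (Sum.inl 0) 1) q) * X (Sum.inl 0)
      + C (coeff (Finsupp.single (Sum.inl 1) 1) q) * X (Sum.inl 1)
      + C (coeff (Finsupp.single (Sum.inl 2) 1) q) * X (Sum.inl 2)
      + C (coeff (Finsupp.single (Sum.inl 3) 1) q) * X (Sum.inl 3)
      + C (coeff (Finsupp.single (Sum.inr 0) 1) q) * X (Sum.inr 0)
      + C (coeff (Finsupp.single (Sum.inr 1) 1) q) * X (Sum.inr 1)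
      + C (coeff (Finsupp.single (Sum.inr 2) 1) q) * X (Sum.inr 2)
      + C (coeff (Finsupp.single (Sum.inr 3) 1) q) * X (Sum.inr 3) := by
    conv_lhs => rw [lin_expand q hqhom]
    rw [Fintype.sum_sum_type, Fin.sum_univ_four, Fin.sum_univ_four]
    ring
  rw [hqlin] at hs1q
  simp only [map_add, map_mul, aeval_C, aeval_X, algebraMap_eq] at hs1q
  simp [hs1] at hs1q
  have hc0 : coeff (Finsupp.single (Sum.inl (0 : Fin 4)) 1) q = 0 := by
    have h := congrArg (coeff (Finsupp.single (Sum.inl (0 : Fin 4)) 1)) hs1q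
    simpa [coeff_X', Finsupp.single_eq_single_iff] using h
  have hc2 : coeff (Finsupp.single (Sum.inl (2 : Fin 4)) 1) q = 0 := by
    have h := congrArg (coeff (Finsupp.single (Sum.inl (2 : Fin 4)) 1)) hs1q
    simpa [coeff_X', Finsupp.single_eq_single_iff] using h
  have hc3 : coeff (Finsupp.single (Sum.inl (3 : Fin 4)) 1) q = 0 := by
    have h := congrArg (coeff (Finsupp.single (Sum.inl (3 : Fin 4)) 1)) hs1q
    simpa [coeff_X', Finsupp.single_eq_single_iff] using h
  have hd0 : coeff (Finsupp.single (Sum.inr (0 : Fin 4)) 1) q = 0 := by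
    have h := congrArg (coeff (Finsupp.single (Sum.inr (0 : Fin 4)) 1)) hs1q
    simpa [coeff_X', Finsupp.single_eq_single_iff] using h
  have hd2 : coeff (Finsupp.single (Sum.inr (2 : Fin 4)) 1) q = 0 := by
    have h := congrArg (coeff (Finsupp.single (Sum.inr (2 : Fin 4)) 1)) hs1q
    simpa [coeff_X', Finsupp.single_eq_single_iff] using h
  have hd3 : coeff (Finsupp.single (Sum.inr (3 : Fin 4)) 1) q = 0 := by
    have h := congrArg (coeff (Finsupp.single (Sum.inr (3 : Fin 4)) 1)) hs1q
    simpa [coeff_X', Finsupp.single_eq_single_iff] using h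
  have hq12 : q = C (coeff (Finsupp.single (Sum.inl (1 : Fin 4)) 1) q) * X (Sum.inl 1)
      + C (coeff (Finsupp.single (Sum.inr (1 : Fin 4)) 1) q) * X (Sum.inr 1) := by
    rw [hqlin, hc0, hc2, hc3, hd0, hd2, hd3]
    simp
  rw [hq12] at hs2q
  simp only [map_add, map_mul, aeval_C, aeval_X, algebraMap_eq] at hs2q
  simp [hs2] at hs2q
  have hc1 : coeff (Finsupp.single (Sum.inl (1 : Fin 4)) 1) q = 0 := by
    have h := congrArg (coeff (Finsupp.single (Sum.inl (1 : Fin 4)) 1)) hs2q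
    simpa [coeff_X', Finsupp.single_eq_single_iff] using h
  have hd1 : coeff (Finsupp.single (Sum.inr (1 : Fin 4)) 1) q = 0 := by
    have h := congrArg (coeff (Finsupp.single (Sum.inr (1 : Fin 4)) 1)) hs2q
    simpa [coeff_X', Finsupp.single_eq_single_iff] using h
  rw [hfq, hq12, hc1, hd1]
  simp

end
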